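/- Let Z be a separable Hilbert space with orthonormal basis (φ_{nj})_{n≥1, 1≤j≤r_n}, let μ_n be real numbers with sup_n μ_n < ∞, and let S(t) be the diagonal semigroup S(t)x = Σ_n e^{μ_n t} Σ_j ⟨x,φ_{nj}⟩φ_{nj}. Let g_1,…,g_p ∈ Z and define B*: Z → ℝ^p by (B*z)_i = ⟨z, g_i⟩. Assume the μ_n are pairwise distinct. Then B*S(t)*x = 0 for all t ≥ 0 if and only if ⟨E(μ_n)x, g_i⟩ = 0 for all n ≥ 1 and all i = 1,…,p, where E(μ_n)x = Σ_{j=1}^{r_n} ⟨x, φ_{nj}⟩ φ_{nj} is the spectral projection. -/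

import Mathlib

open scoped RealInnerProductSpace

/-- Elementary moment lemma: if the "measure" `∑ c n δ_{x n}` with distinct atoms
`x n ∈ (0,1]` has all moments zero, then all coefficients vanish. -/
private lemma mom_zero (c : ℕ → ℝ) (x : ℕ → ℝ) (hx : ∀ n, x n ∈ Set.Ioc (0:ℝ) 1)
    (hinj : Function.Injective x) (hc : Summable fun n => |c n|)
    (hmom : ∀ k : ℕ, ∑' n, c n * x n ^ k = 0) : ∀ m, c m = 0 := by
  classical
  have hxb : ∀ n, |x n| ≤ 1 := fun n => by
    rw [abs_of_pos (hx n).1]; exact (hx n).2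
  have hxI : ∀ n, x n ∈ Set.Icc (0:ℝ) 1 := fun n => ⟨(hx n).1.le, (hx n).2⟩
  -- summability of each power moment
  have hk : ∀ k : ℕ, Summable fun n => c n * x n ^ k := by
    intro k
    refine Summable.of_norm_bounded hc (fun n => ?_)
    rw [Real.norm_eq_abs, abs_mul, abs_pow]
    calc |c n| * |x n| ^ k ≤ |c n| * 1 :=
          mul_le_mul_of_nonneg_left (pow_le_one₀ (abs_nonneg _) (hxb n)) (abs_nonneg _)
      _ = |c n| := mul_one _
  -- summability and vanishing for polynomials
  have hsumP : ∀ P : Polynomial ℝ, Summable fun n => c n * P.eval (x n) := by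
    intro P
    have : (fun n => c n * P.eval (x n)) =
        fun n => ∑ j ∈ Finset.range (P.natDegree + 1), P.coeff j * (c n * x n ^ j) := by
      funext n
      rw [Polynomial.eval_eq_sum_range, Finset.mul_sum]
      exact Finset.sum_congr rfl fun j _ => by ring
    rw [this]
    exact summable_sum fun j _ => (hk j).mul_left _
  have hP0 : ∀ P : Polynomial ℝ, ∑' n, c n * P.eval (x n) = 0 := by
    intro P
    have h1 : ∀ n, c n * P.eval (x n) =
        ∑ j ∈ Finset.range (P.natDegree + 1), P.coeff j * (c n * x n ^ j) := by
      intro n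
      rw [Polynomial.eval_eq_sum_range, Finset.mul_sum]
      exact Finset.sum_congr rfl fun j _ => by ring
    calc ∑' n, c n * P.eval (x n)
        = ∑' n, ∑ j ∈ Finset.range (P.natDegree + 1), P.coeff j * (c n * x n ^ j) :=
          tsum_congr h1
      _ = ∑ j ∈ Finset.range (P.natDegree + 1), ∑' n, P.coeff j * (c n * x n ^ j) :=
          Summable.tsum_finsetSum fun j _ => (hk j).mul_left _
      _ = 0 := by
          refine Finset.sum_eq_zero fun j _ => ?_
          rw [tsum_mul_left, hmom j, mul_zero]
  intro m
  set C : ℝ := ∑' n, |c n| with hCdef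
  have hC0 : 0 ≤ C := tsum_nonneg fun n => abs_nonneg _
  -- the main epsilon estimate
  suffices H : ∀ ε : ℝ, 0 < ε → ε ≤ 1/2 → |c m| ≤ ε * (2 * (C + 2)) by
    by_contra hcm
    have h0 : 0 < |c m| := abs_pos.mpr hcm
    set K : ℝ := 2 * (C + 2) with hK
    have hKpos : (0:ℝ) < K := by positivity
    have hε : (0:ℝ) < min (1/2) (|c m| / (2 * K)) := by positivity
    have h1 := H _ hε (min_le_left _ _)
    have h2 : min (1/2) (|c m| / (2 * K)) ≤ |c m| / (2 * K) := min_le_right _ _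
    have : |c m| ≤ |c m| / (2 * K) * K := by
      refine h1.trans ?_
      exact mul_le_mul_of_nonneg_right h2 hKpos.le
    rw [div_mul_eq_mul_div, mul_comm] at this
    have hK0 : K ≠ 0 := ne_of_gt hKpos
    have h3 : K * |c m| / (2 * K) = |c m| / 2 := by
      field_simp
    rw [h3] at this
    linarith
  intro ε hε hε2
  -- choose a finite set catching all but ε of the mass
  obtain ⟨N, hmN, hN⟩ : ∃ N : ℕ, m < N ∧ C - ε < ∑ n ∈ Finset.range N, |c n| := by
    have ht : Filter.Tendsto (fun N => ∑ n ∈ Finset.range N, |c n|) Filter.atTop (nhds C) :=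
      hc.hasSum.tendsto_sum_nat
    have h1 : ∀ᶠ N in Filter.atTop, C - ε < ∑ n ∈ Finset.range N, |c n| :=
      ht.eventually (eventually_gt_nhds (by linarith))
    exact ((Filter.eventually_gt_atTop m).and h1).exists
  set F : Finset ℕ := Finset.range N with hF
  have hmF : m ∈ F := Finset.mem_range.mpr hmN
  have htail : ∑' (n : ↑(↑F : Set ℕ)ᶜ), |c (n : ℕ)| ≤ ε := by
    have hsplit := Summable.sum_add_tsum_compl (s := F) hc
    have h1 : ∑' (n : ↑(↑F : Set ℕ)ᶜ), |c (n : ℕ)| = C - ∑ n ∈ F, |c n| := by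
      rw [hCdef, ← hsplit]; ring
    rw [h1]; linarith [hN]
  -- a gap δ around x m avoiding the other x n, n ∈ F
  obtain ⟨δ, hδpos, hδ⟩ : ∃ δ : ℝ, 0 < δ ∧ ∀ n ∈ F, n ≠ m → δ ≤ |x n - x m| := by
    rcases (F.erase m).eq_empty_or_nonempty with he | hne
    · exact ⟨1, one_pos, fun n hn hnm =>
        absurd (Finset.mem_erase.mpr ⟨hnm, hn⟩) (by simp [he])⟩
    · refine ⟨(F.erase m).inf' hne fun n => |x n - x m|, ?_, ?_⟩
      · obtain ⟨n, hn, hv⟩ := Finset.exists_mem_eq_inf' hne fun n => |x n - x m|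
        rw [hv]
        have hnm : n ≠ m := (Finset.mem_erase.mp hn).1
        exact abs_pos.mpr (sub_ne_zero.mpr fun hxx => hnm (hinj hxx))
      · intro n hn hnm
        exact Finset.inf'_le _ (Finset.mem_erase.mpr ⟨hnm, hn⟩)
  -- the hat function
  set h : ℝ → ℝ := fun y => max 0 (1 - |y - x m| / δ) with hh
  have hcont : Continuous h := by
    apply continuous_const.max
    exact continuous_const.sub (((continuous_id.sub continuous_const).abs).div_const δ)
  have h_nonneg : ∀ y, 0 ≤ h y := fun y => le_max_left _ _
  have h_le_one : ∀ y, h y ≤ 1 := fun y => by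
    apply max_le zero_le_one
    have : 0 ≤ |y - x m| / δ := div_nonneg (abs_nonneg _) hδpos.le
    linarith
  have h_at_m : h (x m) = 1 := by simp [hh]
  have h_zero : ∀ n ∈ F, n ≠ m → h (x n) = 0 := by
    intro n hn hnm
    have h1 : δ ≤ |x n - x m| := hδ n hn hnm
    have h2 : 1 - |x n - x m| / δ ≤ 0 := by
      have : 1 ≤ |x n - x m| / δ := (one_le_div hδpos).mpr h1
      linarith
    simpa [hh] using max_eq_left h2
  -- Weierstrass approximation
  obtain ⟨P, hP⟩ := exists_polynomial_near_of_continuousOn 0 1 h hcont.continuousOn ε hε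
  have hPb : ∀ n, |P.eval (x n)| ≤ 1 + ε := by
    intro n
    have h1 := hP (x n) (hxI n)
    calc |P.eval (x n)| ≤ |P.eval (x n) - h (x n)| + |h (x n)| := by
          have := abs_add_le (P.eval (x n) - h (x n)) (h (x n)); simpa using this
      _ ≤ ε + 1 := by
          refine add_le_add h1.le ?_
          rw [abs_of_nonneg (h_nonneg _)]; exact h_le_one _
      _ = 1 + ε := by ring
  have hPsmall : ∀ n ∈ F, n ≠ m → |P.eval (x n)| ≤ ε := by
    intro n hn hnm
    have h1 := hP (x n) (hxI n)
    rw [h_zero n hn hnm] at h1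
    simpa using h1.le
  have hPm : 1 - ε ≤ P.eval (x m) := by
    have h1 := hP (x m) (hxI m)
    rw [h_at_m] at h1
    have := abs_le.mp h1.le
    linarith [this.1]
  -- split the vanishing sum
  have hsum := hsumP P
  have hsplit := Summable.sum_add_tsum_compl (s := F) hsum
  rw [hP0 P] at hsplit
  have herase : ∑ n ∈ F, c n * P.eval (x n) =
      c m * P.eval (x m) + ∑ n ∈ F.erase m, c n * P.eval (x n) :=
    (Finset.add_sum_erase F (fun n => c n * P.eval (x n)) hmF).symm
  -- bound the erased part
  have hbound1 : |∑ n ∈ F.erase m, c n * P.eval (x n)| ≤ ε * C := by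
    calc |∑ n ∈ F.erase m, c n * P.eval (x n)|
        ≤ ∑ n ∈ F.erase m, |c n * P.eval (x n)| := Finset.abs_sum_le_sum_abs _ _
      _ ≤ ∑ n ∈ F.erase m, |c n| * ε := by
          refine Finset.sum_le_sum fun n hn => ?_
          rw [abs_mul]
          exact mul_le_mul_of_nonneg_left
            (hPsmall n (Finset.mem_of_mem_erase hn) (Finset.ne_of_mem_erase hn)) (abs_nonneg _)
      _ = (∑ n ∈ F.erase m, |c n|) * ε := by rw [Finset.sum_mul]
      _ ≤ C * ε := by
          refine mul_le_mul_of_nonneg_right ?_ hε.le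
          exact Summable.sum_le_tsum _ (fun n _ => abs_nonneg _) hc
      _ = ε * C := by ring
  -- bound the tail
  have hbound2 : |∑' (n : ↑(↑F : Set ℕ)ᶜ), c (n : ℕ) * P.eval (x (n : ℕ))| ≤ (1 + ε) * ε := by
    have hsub : Summable fun n : ↑(↑F : Set ℕ)ᶜ => c (n : ℕ) * P.eval (x (n : ℕ)) :=
      hsum.subtype _
    have hsubc : Summable fun n : ↑(↑F : Set ℕ)ᶜ => |c (n : ℕ)| := hc.subtype _
    calc |∑' (n : ↑(↑F : Set ℕ)ᶜ), c (n : ℕ) * P.eval (x (n : ℕ))|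
        ≤ ∑' (n : ↑(↑F : Set ℕ)ᶜ), |c (n : ℕ) * P.eval (x (n : ℕ))| := by
          simpa only [Real.norm_eq_abs] using norm_tsum_le_tsum_norm
            (f := fun n : ↑(↑F : Set ℕ)ᶜ => c (n : ℕ) * P.eval (x (n : ℕ)))
            (by simpa only [Real.norm_eq_abs] using hsub.abs)
      _ ≤ ∑' (n : ↑(↑F : Set ℕ)ᶜ), (1 + ε) * |c (n : ℕ)| := by
          refine Summable.tsum_le_tsum (fun n => ?_) hsub.abs (hsubc.mul_left _)
          rw [abs_mul, mul_comm]
          exact mul_le_mul_of_nonneg_right (hPb _) (abs_nonneg _)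
      _ = (1 + ε) * ∑' (n : ↑(↑F : Set ℕ)ᶜ), |c (n : ℕ)| := tsum_mul_left
      _ ≤ (1 + ε) * ε := by
          refine mul_le_mul_of_nonneg_left htail ?_
          linarith
  -- put it together
  have heq : c m * P.eval (x m) =
      -(∑ n ∈ F.erase m, c n * P.eval (x n)
        + ∑' (n : ↑(↑F : Set ℕ)ᶜ), c (n : ℕ) * P.eval (x (n : ℕ))) := by
    rw [herase] at hsplit
    linarith [hsplit]
  have hfin : |c m| * (1 - ε) ≤ ε * C + (1 + ε) * ε := by
    have h1 : |c m| * (1 - ε) ≤ |c m * P.eval (x m)| := by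
      rw [abs_mul]
      refine mul_le_mul_of_nonneg_left ?_ (abs_nonneg _)
      have : (0:ℝ) ≤ P.eval (x m) := by linarith
      rw [abs_of_nonneg this]
      exact hPm
    have h2 : |c m * P.eval (x m)| ≤ ε * C + (1 + ε) * ε := by
      rw [heq, abs_neg]
      calc |∑ n ∈ F.erase m, c n * P.eval (x n)
            + ∑' (n : ↑(↑F : Set ℕ)ᶜ), c (n : ℕ) * P.eval (x (n : ℕ))|
          ≤ |∑ n ∈ F.erase m, c n * P.eval (x n)|
            + |∑' (n : ↑(↑F : Set ℕ)ᶜ), c (n : ℕ) * P.eval (x (n : ℕ))| := abs_add_le _ _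
        _ ≤ ε * C + (1 + ε) * ε := add_le_add hbound1 hbound2
    linarith
  -- conclude
  nlinarith [abs_nonneg (c m)]

/-- Uniqueness of Dirichlet-type series with distinct exponents bounded above,
evaluated only at nonnegative times. -/
private lemma dirichlet_zero (c ν : ℕ → ℝ) (M : ℝ) (hM : ∀ n, ν n ≤ M)
    (hinj : Function.Injective ν) (hc : Summable fun n => |c n|)
    (h : ∀ t : ℝ, 0 ≤ t → ∑' n, c n * Real.exp (ν n * t) = 0) : ∀ m, c m = 0 := by
  apply mom_zero c (fun n => Real.exp (ν n - M)) ?_ ?_ hc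
  · intro k
    have h1 : ∀ n, c n * Real.exp (ν n - M) ^ k =
        Real.exp (-(M * k)) * (c n * Real.exp (ν n * k)) := by
      intro n
      rw [← Real.exp_nat_mul,
        show ((k : ℝ) * (ν n - M)) = -(M * k) + ν n * k by ring, Real.exp_add]
      ring
    rw [tsum_congr h1, tsum_mul_left, h (k : ℝ) (Nat.cast_nonneg k), mul_zero]
  · intro n
    exact ⟨Real.exp_pos _, Real.exp_le_one_iff.mpr (by linarith [hM n])⟩
  · intro a b hab
    have := Real.exp_injective hab
    have : ν a = ν b := by linarith
    exact hinj this

/-- `B* S(t)* x = 0` for all `t ≥ 0` iff `⟪E(μ_n) x, g_i⟫ = 0`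
for all `n` and `i`, where `S` is the self-adjoint diagonal semigroup and
`E n` the spectral projection onto the `n`-th eigenspace. -/
theorem kernel_iff_spectral_projections
    {Z : Type*} [NormedAddCommGroup Z] [InnerProductSpace ℝ Z] [CompleteSpace Z]
    (r : ℕ → ℕ) (φ : HilbertBasis (Σ n : ℕ, Fin (r n)) ℝ Z)
    (μ : ℕ → ℝ) (hμ : BddAbove (Set.range μ)) (hdist : Function.Injective μ)
    (p : ℕ) (g : Fin p → Z)
    (S : ℝ → Z → Z)
    (hS : ∀ t x, S t x = ∑' (i : (Σ n : ℕ, Fin (r n))),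
        (Real.exp (μ i.1 * t) * ⟪x, φ i⟫) • (φ i : Z))
    (E : ℕ → Z → Z)
    (hE : ∀ n x, E n x = ∑ j : Fin (r n), ⟪x, φ ⟨n, j⟩⟫ • (φ ⟨n, j⟩ : Z))
    (x : Z) :
    (∀ t : ℝ, 0 ≤ t → ∀ i : Fin p, ⟪S t x, g i⟫ = 0) ↔
      (∀ n : ℕ, ∀ i : Fin p, ⟪E n x, g i⟫ = 0) := by
  classical
  obtain ⟨M, hM⟩ := hμ
  have hM' : ∀ n, μ n ≤ M := fun n => hM ⟨n, rfl⟩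
  -- products of coefficients
  have hsumA : ∀ i : Fin p, Summable fun σ : Σ n : ℕ, Fin (r n) => ⟪x, φ σ⟫ * ⟪φ σ, g i⟫ :=
    fun i => φ.summable_inner_mul_inner x (g i)
  -- the spectral coefficients
  have hcE : ∀ (i : Fin p) (n : ℕ),
      (⟪E n x, g i⟫ : ℝ) = ∑ j : Fin (r n), ⟪x, φ ⟨n, j⟩⟫ * ⟪φ ⟨n, j⟩, g i⟫ := by
    intro i n
    rw [hE]
    rw [sum_inner]
    exact Finset.sum_congr rfl fun j _ => real_inner_smul_left _ _ _
  have hcsum : ∀ i : Fin p, Summable fun n => |(⟪E n x, g i⟫ : ℝ)| := by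
    intro i
    have habs : Summable fun σ : Σ n : ℕ, Fin (r n) => |⟪x, φ σ⟫ * ⟪φ σ, g i⟫| := (hsumA i).abs
    have hsig : Summable fun n => ∑' j : Fin (r n), |⟪x, φ ⟨n, j⟩⟫ * ⟪φ ⟨n, j⟩, g i⟫| :=
      habs.sigma
    refine Summable.of_nonneg_of_le (fun n => abs_nonneg _) (fun n => ?_) hsig
    rw [hcE, tsum_fintype]
    exact Finset.abs_sum_le_sum_abs _ _
  -- the key identity
  have hkey : ∀ t : ℝ, 0 ≤ t → ∀ i : Fin p,
      (⟪S t x, g i⟫ : ℝ) = ∑' n, (⟪E n x, g i⟫ : ℝ) * Real.exp (μ n * t) := by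
    intro t ht i
    set w : (Σ n : ℕ, Fin (r n)) → ℝ := fun σ => Real.exp (μ σ.1 * t) * ⟪x, φ σ⟫ with hw
    have hwb : ∀ σ : Σ n : ℕ, Fin (r n), |Real.exp (μ σ.1 * t)| ≤ Real.exp (M * t) := by
      intro σ
      rw [abs_of_pos (Real.exp_pos _)]
      exact Real.exp_le_exp.mpr (mul_le_mul_of_nonneg_right (hM' σ.1) ht)
    -- square-summability of the coefficients
    have hpar : Summable fun σ : Σ n : ℕ, Fin (r n) => ⟪x, φ σ⟫ * ⟪φ σ, x⟫ :=
      φ.summable_inner_mul_inner x x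
    have hpar' : Summable fun σ : Σ n : ℕ, Fin (r n) => (⟪x, φ σ⟫ : ℝ) ^ 2 := by
      have : ∀ σ : Σ n : ℕ, Fin (r n), (⟪x, φ σ⟫ : ℝ) ^ 2 = ⟪x, φ σ⟫ * ⟪φ σ, x⟫ := fun σ => by
        rw [sq, real_inner_comm x (φ σ)]
      exact hpar.congr fun σ => (this σ).symm
    have hw2 : Summable fun σ : Σ n : ℕ, Fin (r n) => ‖w σ‖ ^ 2 := by
      refine Summable.of_nonneg_of_le (fun σ => sq_nonneg _) (fun σ => ?_)
        (hpar'.mul_left (Real.exp (M * t) ^ 2))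
      rw [hw, Real.norm_eq_abs, abs_mul, mul_pow]
      have h1 : |Real.exp (μ σ.1 * t)| ^ 2 ≤ Real.exp (M * t) ^ 2 := by
        have := hwb σ
        nlinarith [abs_nonneg (Real.exp (μ σ.1 * t))]
      have h2 : |(⟪x, φ σ⟫ : ℝ)| ^ 2 = (⟪x, φ σ⟫ : ℝ) ^ 2 := sq_abs _
      rw [h2]
      nlinarith [sq_nonneg (⟪x, φ σ⟫ : ℝ), sq_abs (⟪x, φ σ⟫ : ℝ)]
    -- summability of the vector series
    have hv : Summable fun σ : Σ n : ℕ, Fin (r n) => w σ • (φ σ : Z) := by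
      have horth := φ.orthonormal.orthogonalFamily
      have := (horth.summable_iff_norm_sq_summable w).mpr hw2
      have happ : ∀ σ : Σ n : ℕ, Fin (r n),
          (LinearIsometry.toSpanSingleton ℝ Z (φ.orthonormal.1 σ)) (w σ) = w σ • (φ σ : Z) :=
        fun σ => LinearIsometry.toSpanSingleton_apply _ _
      exact this.congr happ
    -- pull the inner product inside
    have hmap : (⟪g i, S t x⟫ : ℝ) = ∑' σ : Σ n : ℕ, Fin (r n), w σ * ⟪g i, φ σ⟫ := by
      rw [hS]
      have := ContinuousLinearMap.map_tsum (innerSL ℝ (g i)) hv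
      simpa [real_inner_smul_right] using this
    -- summability of the scalar series
    have hwsum : Summable fun σ : Σ n : ℕ, Fin (r n) => w σ * ⟪g i, φ σ⟫ := by
      refine Summable.of_norm_bounded (((hsumA i).abs).mul_left (Real.exp (M * t)))
        (fun σ => ?_)
      rw [Real.norm_eq_abs, hw]
      have : |Real.exp (μ σ.1 * t) * ⟪x, φ σ⟫ * ⟪g i, φ σ⟫|
          = |Real.exp (μ σ.1 * t)| * |⟪x, φ σ⟫ * ⟪φ σ, g i⟫| := by
        rw [real_inner_comm (g i) (φ σ), ← abs_mul]
        congr 1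
        ring
      rw [this]
      exact mul_le_mul_of_nonneg_right (hwb σ) (abs_nonneg _)
    -- regroup over the sigma type
    have hsig : ∑' σ : Σ n : ℕ, Fin (r n), w σ * ⟪g i, φ σ⟫
        = ∑' n, ∑' j : Fin (r n), w ⟨n, j⟩ * ⟪g i, φ ⟨n, j⟩⟫ := Summable.tsum_sigma hwsum
    rw [real_inner_comm, hmap, hsig]
    refine tsum_congr fun n => ?_
    rw [tsum_fintype, hcE, Finset.sum_mul]
    refine Finset.sum_congr rfl fun j _ => ?_
    rw [hw]
    rw [real_inner_comm (g i) (φ ⟨n, j⟩)]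
    ring
  constructor
  · intro h n i
    refine dirichlet_zero (fun n => (⟪E n x, g i⟫ : ℝ)) μ M hM' hdist (hcsum i) ?_ n
    intro t ht
    have h1 := hkey t ht i
    have h2 := h t ht i
    rw [h2] at h1
    linarith [h1]
  · intro h t ht i
    rw [hkey t ht i]
    have : ∀ n, (⟪E n x, g i⟫ : ℝ) * Real.exp (μ n * t) = 0 := fun n => by
      rw [h n i, zero_mul]
    rw [tsum_congr this, tsum_zero]
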